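/- arXiv:2412.12930 — 3 statements merged into one kernel-verified Lean document; each statement's English description precedes it below -/
import Mathlib

section
/- Let s ≤ t, let e : ℝ → V be continuously differentiable on [s, t], and let ρ : ℝ → ℝ be continuous on [s, t] such that for every τ ∈ [s, t] and every φ ∈ V the residual bound |m(e′(τ), φ) + a(e(τ), φ)| ≤ ρ(τ)·√(a(φ, φ)) holds. Then m(e(t), e(t)) + ∫_s^t a(e(τ), e(τ)) dτ ≤ ∫_s^t ρ(τ)² dτ + m(e(s), e(s)). (This is the per-interval forward energy estimate, inequality (3.13) in the proof of Lemma thm:errorBoundStateEnergy, for strong solutions on a subinterval on which the switching signal is constant; ρ(τ) bounds the a-dual norm of the residual R(τ) = ℬu(τ) − M ė(τ) − A e(τ).) -/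
/-- Per-interval forward energy estimate, inequality (3.13) in the proof of
Lemma 3.7 (thm:errorBoundStateEnergy): if on `[s, t]` the error `e` satisfies the
residual bound `|m(e′(τ), φ) + a(e(τ), φ)| ≤ ρ(τ)·√(a(φ,φ))` for all `φ`, then
`m(e(t), e(t)) + ∫ₛᵗ a(e, e) ≤ ∫ₛᵗ ρ² + m(e(s), e(s))`. -/
theorem per_interval_forward_energy_estimate
    {V : Type*} [NormedAddCommGroup V] [InnerProductSpace ℝ V]
    (m a : V →L[ℝ] V →L[ℝ] ℝ)
    (hm_symm : ∀ x y : V, m x y = m y x)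
    (hm_pos : ∀ φ : V, 0 ≤ m φ φ)
    (ha_pos : ∀ φ : V, 0 ≤ a φ φ)
    (s t : ℝ) (hst : s ≤ t)
    (e e' : ℝ → V)
    (he : ∀ τ ∈ Set.Icc s t, HasDerivWithinAt e (e' τ) (Set.Icc s t) τ)
    (he' : ContinuousOn e' (Set.Icc s t))
    (ρ : ℝ → ℝ) (hρ : ContinuousOn ρ (Set.Icc s t))
    (hres : ∀ τ ∈ Set.Icc s t, ∀ φ : V,
      |m (e' τ) φ + a (e τ) φ| ≤ ρ τ * Real.sqrt (a φ φ)) :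
    m (e t) (e t) + ∫ τ in s..t, a (e τ) (e τ)
      ≤ (∫ τ in s..t, (ρ τ)^2) + m (e s) (e s) := by
  set E : ℝ → ℝ := fun τ => m (e τ) (e τ) with hE
  set E' : ℝ → ℝ := fun τ => 2 * m (e' τ) (e τ) with hE'
  have heC : ContinuousOn e (Set.Icc s t) := fun τ hτ => (he τ hτ).continuousWithinAt
  -- derivative of E
  have hEderiv : ∀ τ ∈ Set.Icc s t, HasDerivWithinAt E (E' τ) (Set.Icc s t) τ := by
    intro τ hτ
    have hpair : HasDerivWithinAt (fun τ => (e τ, e τ)) (e' τ, e' τ) (Set.Icc s t) τ :=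
      (he τ hτ).prodMk (he τ hτ)
    have hbil := (m.isBoundedBilinearMap.hasFDerivAt (e τ, e τ)).comp_hasDerivWithinAt τ hpair
    have : HasDerivWithinAt E (m (e τ) (e' τ) + m (e' τ) (e τ)) (Set.Icc s t) τ := by
      convert hbil using 1
      · rfl
      · rfl
      · rfl
      · simp [IsBoundedBilinearMap.deriv_apply]
    simpa [hE', hm_symm (e τ) (e' τ), two_mul] using this
  have hE'C : ContinuousOn E' (Set.Icc s t) :=
    continuousOn_const.mul ((m.continuous₂.comp_continuousOn (he'.prodMk heC)))
  have hE'int : IntervalIntegrable E' MeasureTheory.volume s t :=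
    (hE'C.mono (by rw [Set.uIcc_of_le hst])).intervalIntegrable
  -- FTC
  have hftc : E t - E s = ∫ τ in s..t, E' τ := by
    refine (intervalIntegral.integral_eq_sub_of_hasDeriv_right_of_le hst
      (fun τ hτ => (hEderiv τ hτ).continuousWithinAt) ?_ hE'int).symm
    intro τ hτ
    exact ((hEderiv τ (Set.mem_Icc_of_Ioo hτ)).hasDerivAt
      (Icc_mem_nhds hτ.1 hτ.2)).hasDerivWithinAt
  -- pointwise bound: E' ≤ ρ² - a(e,e)
  have hptwise : ∀ τ ∈ Set.Icc s t, E' τ ≤ (ρ τ)^2 - a (e τ) (e τ) := by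
    intro τ hτ
    have h1 := hres τ hτ (e τ)
    have h2 : m (e' τ) (e τ) + a (e τ) (e τ) ≤ ρ τ * Real.sqrt (a (e τ) (e τ)) :=
      (le_abs_self _).trans h1
    have h3 : 2 * (ρ τ * Real.sqrt (a (e τ) (e τ))) ≤ (ρ τ)^2 + a (e τ) (e τ) := by
      have := two_mul_le_add_sq (ρ τ) (Real.sqrt (a (e τ) (e τ)))
      rw [Real.sq_sqrt (ha_pos (e τ))] at this
      linarith
    have : 2 * m (e' τ) (e τ) ≤ (ρ τ)^2 + a (e τ) (e τ) - 2 * a (e τ) (e τ) := by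
      nlinarith
    simpa [hE'] using this.trans_eq (by ring)
  have haC : ContinuousOn (fun τ => a (e τ) (e τ)) (Set.Icc s t) :=
    a.continuous₂.comp_continuousOn (heC.prodMk heC)
  have haint : IntervalIntegrable (fun τ => a (e τ) (e τ)) MeasureTheory.volume s t :=
    (haC.mono (by rw [Set.uIcc_of_le hst])).intervalIntegrable
  have hρint : IntervalIntegrable (fun τ => (ρ τ)^2) MeasureTheory.volume s t :=
    ((hρ.pow 2).mono (by rw [Set.uIcc_of_le hst])).intervalIntegrable
  have hintmono : (∫ τ in s..t, E' τ) ≤ ∫ τ in s..t, ((ρ τ)^2 - a (e τ) (e τ)) := by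
    apply intervalIntegral.integral_mono_on hst hE'int (hρint.sub haint)
    exact hptwise
  rw [intervalIntegral.integral_sub hρint haint] at hintmono
  have := hftc ▸ hintmono
  simp only [hE] at this ⊢
  linarith
end

section
/- Let s ≤ t, let ε : ℝ → V be continuously differentiable on [s, t], and let ρ : ℝ → ℝ be continuous on [s, t] such that for every τ ∈ [s, t] and every φ ∈ V the residual bound |−m(ε′(τ), φ) + a(φ, ε(τ))| ≤ ρ(τ)·√(a(φ, φ)) holds. Then m(ε(s), ε(s)) + ∫_s^t a(ε(τ), ε(τ)) dτ ≤ ∫_s^t ρ(τ)² dτ + m(ε(t), ε(t)). (This is the per-interval backward (adjoint) energy estimate, inequality (3.17) in the proof of Lemma thm:errorBoundAdjointEnergy, for strong solutions on a subinterval on which the switching signal is constant; ρ(τ) bounds the a-dual norm of the adjoint residual Q(τ).) -/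
/-- Per-interval backward (adjoint) energy estimate, inequality (3.17) in the
proof of Lemma 3.8 (thm:errorBoundAdjointEnergy): if on `[s, t]` the adjoint
error `ε` satisfies the residual bound `|−m(ε′(τ), φ) + a(φ, ε(τ))| ≤ ρ(τ)·√(a(φ,φ))`
for all `φ`, then `m(ε(s), ε(s)) + ∫ₛᵗ a(ε, ε) ≤ ∫ₛᵗ ρ² + m(ε(t), ε(t))`. -/
theorem per_interval_backward_energy_estimate
    {V : Type*} [NormedAddCommGroup V] [InnerProductSpace ℝ V]
    (m a : V →L[ℝ] V →L[ℝ] ℝ)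
    (hm_symm : ∀ x y : V, m x y = m y x)
    (hm_pos : ∀ φ : V, 0 ≤ m φ φ)
    (ha_pos : ∀ φ : V, 0 ≤ a φ φ)
    (s t : ℝ) (hst : s ≤ t)
    (ε ε' : ℝ → V)
    (hε : ∀ τ ∈ Set.Icc s t, HasDerivWithinAt ε (ε' τ) (Set.Icc s t) τ)
    (hε' : ContinuousOn ε' (Set.Icc s t))
    (ρ : ℝ → ℝ) (hρ : ContinuousOn ρ (Set.Icc s t))
    (hres : ∀ τ ∈ Set.Icc s t, ∀ φ : V,
      |-(m (ε' τ) φ) + a φ (ε τ)| ≤ ρ τ * Real.sqrt (a φ φ)) :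
    m (ε s) (ε s) + ∫ τ in s..t, a (ε τ) (ε τ)
      ≤ (∫ τ in s..t, (ρ τ)^2) + m (ε t) (ε t) := by
  set F : ℝ → ℝ := fun τ => m (ε τ) (ε τ) with hF
  set F' : ℝ → ℝ := fun τ => 2 * m (ε' τ) (ε τ) with hF'
  have hεc : ContinuousOn ε (Set.Icc s t) := fun τ hτ => (hε τ hτ).continuousWithinAt
  -- derivative of F
  have hFd : ∀ τ ∈ Set.Icc s t, HasDerivWithinAt F (F' τ) (Set.Icc s t) τ := by
    intro τ hτ
    have h1 : HasDerivWithinAt (fun τ => m (ε τ)) (m (ε' τ)) (Set.Icc s t) τ :=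
      m.hasFDerivAt.comp_hasDerivWithinAt τ (hε τ hτ)
    have h2 := h1.clm_apply (hε τ hτ)
    have : m (ε' τ) (ε τ) + m (ε τ) (ε' τ) = F' τ := by
      simp [hF', hm_symm (ε τ) (ε' τ)]; ring
    rw [← this]
    exact h2
  have hF'c : ContinuousOn F' (Set.Icc s t) := by
    apply ContinuousOn.mul continuousOn_const
    exact (m.continuous.comp_continuousOn hε').clm_apply hεc
  have hFc : ContinuousOn F (Set.Icc s t) :=
    (m.continuous.comp_continuousOn hεc).clm_apply hεc
  have hF'int : IntervalIntegrable F' MeasureTheory.volume s t :=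
    hF'c.intervalIntegrable_of_Icc hst
  -- FTC
  have hftc : ∫ τ in s..t, F' τ = F t - F s := by
    apply intervalIntegral.integral_eq_sub_of_hasDeriv_right_of_le hst hFc _ hF'int
    intro x hx
    have hmem : Set.Icc s t ∈ nhds x := Icc_mem_nhds hx.1 hx.2
    exact ((hFd x (Set.mem_Icc_of_Ioo hx)).hasDerivAt hmem).hasDerivWithinAt
  -- pointwise inequality
  have hpt : ∀ τ ∈ Set.Icc s t, a (ε τ) (ε τ) ≤ (ρ τ)^2 + F' τ := by
    intro τ hτ
    have h := hres τ hτ (ε τ)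
    set A := a (ε τ) (ε τ) with hA
    have hA0 : 0 ≤ A := ha_pos _
    have h1 : A - m (ε' τ) (ε τ) ≤ ρ τ * Real.sqrt A := by
      calc A - m (ε' τ) (ε τ) = -(m (ε' τ) (ε τ)) + A := by ring
        _ ≤ |-(m (ε' τ) (ε τ)) + A| := le_abs_self _
        _ ≤ ρ τ * Real.sqrt A := h
    have h2 : ρ τ * Real.sqrt A ≤ ((ρ τ)^2 + A) / 2 := by
      nlinarith [sq_nonneg (ρ τ - Real.sqrt A), Real.sq_sqrt hA0, Real.sqrt_nonneg A]
    have : A - m (ε' τ) (ε τ) ≤ ((ρ τ)^2 + A) / 2 := h1.trans h2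
    simp only [hF']
    linarith
  -- integrate
  have haint : IntervalIntegrable (fun τ => a (ε τ) (ε τ)) MeasureTheory.volume s t :=
    ((a.continuous.comp_continuousOn hεc).clm_apply hεc).intervalIntegrable_of_Icc hst
  have hρint : IntervalIntegrable (fun τ => (ρ τ)^2) MeasureTheory.volume s t :=
    (hρ.pow 2).intervalIntegrable_of_Icc hst
  have hmono : ∫ τ in s..t, a (ε τ) (ε τ) ≤ ∫ τ in s..t, ((ρ τ)^2 + F' τ) := by
    apply intervalIntegral.integral_mono_on hst haint (hρint.add hF'int)
    exact hpt
  rw [intervalIntegral.integral_add hρint hF'int, hftc] at hmono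
  linarith
end

section
/- Let t₀ < T, let δ : ℝ → ℝ^p be continuous on [t₀, T], let μ ≥ 0, and let ε : ℝ → V be continuously differentiable on [t₀, T] and satisfy, for all τ ∈ [t₀, T] and all φ ∈ V, the adjoint equation −m(ε′(τ), φ) + a(φ, ε(τ)) = ⟨δ(τ), Cφ⟩_{ℝ^p}, together with the terminal condition m(ε(T), φ) = μ·⟨δ(T), Cφ⟩_{ℝ^p} for all φ ∈ V. Then m(ε(t₀), ε(t₀)) ≤ (γ_a²/2)·∫_{t₀}^{T} ‖δ(τ)‖²_{ℝ^p} dτ + μ²·γ_m²·‖δ(T)‖²_{ℝ^p}. (This is the strong-solution, single-mode form of Lemma lem:relationIntermeadiateAdjoints, estimates (3.4a)–(3.4b): the initial value of the adjoint error driven by an output mismatch δ is controlled by the L²-norm of δ and its terminal value.) -/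
open scoped RealInnerProductSpace

/-- Strong-solution, single-mode form of Lemma 3.4
(lem:relationIntermeadiateAdjoints), estimates (3.4a)–(3.4b): if `ε` solves the
adjoint equation `−m(ε′(τ), φ) + a(φ, ε(τ)) = ⟨δ(τ), Cφ⟩` on `[t₀, T]` with the
terminal condition `m(ε(T), φ) = μ⟨δ(T), Cφ⟩`, then
`m(ε(t₀), ε(t₀)) ≤ (γ_a²/2) ∫_{t₀}^{T} ‖δ‖² + μ² γ_m² ‖δ(T)‖²`. -/
theorem adjoint_initial_value_estimate
    {V : Type*} [NormedAddCommGroup V] [InnerProductSpace ℝ V]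
    (m a : V →L[ℝ] V →L[ℝ] ℝ)
    (hm_symm : ∀ x y : V, m x y = m y x)
    (hm_pos : ∀ φ : V, 0 ≤ m φ φ)
    (ha_pos : ∀ φ : V, 0 ≤ a φ φ)
    (p : ℕ) (C : V →ₗ[ℝ] EuclideanSpace ℝ (Fin p))
    (γa γm : ℝ) (hγa : 0 < γa) (hγm : 0 < γm)
    (hCa : ∀ φ : V, ‖C φ‖ ≤ γa * Real.sqrt (a φ φ))
    (hCm : ∀ φ : V, ‖C φ‖ ≤ γm * Real.sqrt (m φ φ))
    (t₀ T : ℝ) (hT : t₀ < T)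
    (δ : ℝ → EuclideanSpace ℝ (Fin p)) (hδ : ContinuousOn δ (Set.Icc t₀ T))
    (μ : ℝ) (hμ : 0 ≤ μ)
    (ε ε' : ℝ → V)
    (hε : ∀ τ ∈ Set.Icc t₀ T, HasDerivWithinAt ε (ε' τ) (Set.Icc t₀ T) τ)
    (hε' : ContinuousOn ε' (Set.Icc t₀ T))
    (heq : ∀ τ ∈ Set.Icc t₀ T, ∀ φ : V,
      -(m (ε' τ) φ) + a φ (ε τ) = ⟪δ τ, C φ⟫)
    (hterm : ∀ φ : V, m (ε T) φ = μ * ⟪δ T, C φ⟫) :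
    m (ε t₀) (ε t₀)
      ≤ (γa^2 / 2) * (∫ τ in t₀..T, ‖δ τ‖^2) + μ^2 * γm^2 * ‖δ T‖^2 := by
  -- Energy E τ = m (ε τ) (ε τ)
  set E : ℝ → ℝ := fun τ => m (ε τ) (ε τ) with hEdef
  have hεc : ContinuousOn ε (Set.Icc t₀ T) := fun τ hτ =>
    (hε τ hτ).continuousWithinAt
  -- derivative of E
  have hE : ∀ τ ∈ Set.Icc t₀ T,
      HasDerivWithinAt E (2 * m (ε' τ) (ε τ)) (Set.Icc t₀ T) τ := by
    intro τ hτ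
    have h1 : HasDerivWithinAt (fun τ => m (ε τ)) (m (ε' τ)) (Set.Icc t₀ T) τ :=
      m.hasFDerivAt.comp_hasDerivWithinAt τ (hε τ hτ)
    have h2 := h1.clm_apply (hε τ hτ)
    have : m (ε' τ) (ε τ) + m (ε τ) (ε' τ) = 2 * m (ε' τ) (ε τ) := by
      rw [hm_symm (ε τ) (ε' τ)]; ring
    simpa [hEdef, this] using h2
  have hEc : ContinuousOn E (Set.Icc t₀ T) := fun τ hτ =>
    (hE τ hτ).continuousWithinAt
  -- pointwise lower bound on E'
  have hptwise : ∀ τ ∈ Set.Icc t₀ T,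
      -((γa^2/2) * ‖δ τ‖^2) ≤ 2 * m (ε' τ) (ε τ) := by
    intro τ hτ
    have h := heq τ hτ (ε τ)
    have hA : 0 ≤ a (ε τ) (ε τ) := ha_pos _
    set s : ℝ := Real.sqrt (a (ε τ) (ε τ)) with hsdef
    have hs2 : s^2 = a (ε τ) (ε τ) := Real.sq_sqrt hA
    have hCb : ‖C (ε τ)‖ ≤ γa * s := hCa (ε τ)
    have hinner : ⟪δ τ, C (ε τ)⟫ ≤ ‖δ τ‖ * (γa * s) :=
      le_trans (real_inner_le_norm _ _)
        (mul_le_mul_of_nonneg_left hCb (norm_nonneg _))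
    have hm' : m (ε' τ) (ε τ) = a (ε τ) (ε τ) - ⟪δ τ, C (ε τ)⟫ := by linarith
    have hsnn : 0 ≤ s := Real.sqrt_nonneg _
    nlinarith [sq_nonneg (2*s - γa * ‖δ τ‖), sq_nonneg (‖δ τ‖)]
  -- integrability
  have hE'int : IntervalIntegrable (fun τ => 2 * m (ε' τ) (ε τ)) MeasureTheory.volume t₀ T := by
    apply ContinuousOn.intervalIntegrable
    rw [Set.uIcc_of_le hT.le]
    exact (continuousOn_const.mul
      (((m.continuous.comp_continuousOn hε').clm_apply hεc)))
  have hδint : IntervalIntegrable (fun τ => -((γa^2/2) * ‖δ τ‖^2)) MeasureTheory.volume t₀ T := by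
    apply ContinuousOn.intervalIntegrable
    rw [Set.uIcc_of_le hT.le]
    exact (continuousOn_const.mul ((hδ.norm).pow 2)).neg
  have hδint2 : IntervalIntegrable (fun τ => ‖δ τ‖^2) MeasureTheory.volume t₀ T := by
    apply ContinuousOn.intervalIntegrable
    rw [Set.uIcc_of_le hT.le]
    exact (hδ.norm).pow 2
  -- FTC
  have hFTC : ∫ τ in t₀..T, 2 * m (ε' τ) (ε τ) = E T - E t₀ := by
    apply intervalIntegral.integral_eq_sub_of_hasDeriv_right_of_le hT.le hEc _ hE'int
    intro x hx
    exact ((hE x (Set.Ioo_subset_Icc_self hx)).hasDerivAt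
      (Icc_mem_nhds hx.1 hx.2)).hasDerivWithinAt
  have hmono : ∫ τ in t₀..T, -((γa^2/2) * ‖δ τ‖^2)
      ≤ ∫ τ in t₀..T, 2 * m (ε' τ) (ε τ) :=
    intervalIntegral.integral_mono_on hT.le hδint hE'int hptwise
  have hintval : ∫ τ in t₀..T, -((γa^2/2) * ‖δ τ‖^2)
      = -((γa^2/2) * ∫ τ in t₀..T, ‖δ τ‖^2) := by
    rw [intervalIntegral.integral_neg, intervalIntegral.integral_const_mul]
  -- terminal bound: E T ≤ μ² γm² ‖δ T‖²
  have htermbd : E T ≤ μ^2 * γm^2 * ‖δ T‖^2 := by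
    have h := hterm (ε T)
    set s : ℝ := Real.sqrt (m (ε T) (ε T)) with hsdef
    have hs2 : s^2 = m (ε T) (ε T) := Real.sq_sqrt (hm_pos _)
    have hsnn : 0 ≤ s := Real.sqrt_nonneg _
    have hinner : ⟪δ T, C (ε T)⟫ ≤ ‖δ T‖ * (γm * s) :=
      le_trans (real_inner_le_norm _ _)
        (mul_le_mul_of_nonneg_left (hCm (ε T)) (norm_nonneg _))
    have hk : (0:ℝ) ≤ μ * γm * ‖δ T‖ :=
      mul_nonneg (mul_nonneg hμ hγm.le) (norm_nonneg _)
    have hET : s^2 ≤ (μ * γm * ‖δ T‖) * s := by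
      rw [hs2, h]
      calc μ * ⟪δ T, C (ε T)⟫ ≤ μ * (‖δ T‖ * (γm * s)) :=
            mul_le_mul_of_nonneg_left hinner hμ
        _ = (μ * γm * ‖δ T‖) * s := by ring
    have hsle : s ≤ μ * γm * ‖δ T‖ := by nlinarith [sq_nonneg s]
    have : s^2 ≤ (μ * γm * ‖δ T‖)^2 := by nlinarith
    calc E T = s^2 := hs2.symm
      _ ≤ (μ * γm * ‖δ T‖)^2 := this
      _ = μ^2 * γm^2 * ‖δ T‖^2 := by ring
  have hT₀mem : t₀ ∈ Set.Icc t₀ T := Set.left_mem_Icc.mpr hT.le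
  have : E t₀ ≤ E T + (γa^2/2) * ∫ τ in t₀..T, ‖δ τ‖^2 := by
    rw [hintval, hFTC] at hmono; linarith
  calc m (ε t₀) (ε t₀) = E t₀ := rfl
    _ ≤ E T + (γa^2/2) * ∫ τ in t₀..T, ‖δ τ‖^2 := this
    _ ≤ (γa^2/2) * (∫ τ in t₀..T, ‖δ τ‖^2) + μ^2 * γm^2 * ‖δ T‖^2 := by
        linarith
end
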